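/- For every t ≠ 0 and every L > 0, the function x ↦ e^{i x²/(4t)} is Gevrey of order 1/2 on [−L, L]: there exist constants C(t,L) > 0 and R = √|t| such that |∂_x^k e^{i x²/(4t)}| ≤ C(t,L) · (k!)^(1/2) / (k^(1/4) · (√|t|)^k) for all k ≥ 1 and x ∈ [−L,L]. -/

import Mathlib

open Real Set Complex Finset

namespace GKG

def N (k j : ℕ) : ℕ := k.choose (2*j) * Nat.centralBinom j * j.factorial

lemma N_zero (k : ℕ) : N k 0 = 1 := by simp [N, Nat.centralBinom]

lemma N_eq_zero {k j : ℕ} (h : k < 2*j) : N k j = 0 := by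
  simp [N, Nat.choose_eq_zero_of_lt h]

lemma N_rec (k j : ℕ) : N (k+1) (j+1) = N k (j+1) + 2*(k - 2*j) * N k j := by
  have h2 : k.choose (2*j+1) * (2*j+1) = k.choose (2*j) * (k - 2*j) :=
    Nat.choose_succ_right_eq k (2*j)
  have h3 : (j+1) * Nat.centralBinom (j+1) = 2*(2*j+1) * Nat.centralBinom j :=
    Nat.succ_mul_centralBinom_succ j
  have key : k.choose (2*j+1) * Nat.centralBinom (j+1) * (j+1).factorial
      = 2*(k-2*j) * (k.choose (2*j) * Nat.centralBinom j * j.factorial) := by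
    rw [Nat.factorial_succ]
    calc k.choose (2*j+1) * Nat.centralBinom (j+1) * ((j+1) * j.factorial)
        = k.choose (2*j+1) * ((j+1) * Nat.centralBinom (j+1)) * j.factorial := by ring
      _ = k.choose (2*j+1) * (2*(2*j+1) * Nat.centralBinom j) * j.factorial := by rw [h3]
      _ = 2 * (k.choose (2*j+1) * (2*j+1)) * Nat.centralBinom j * j.factorial := by ring
      _ = 2 * (k.choose (2*j) * (k-2*j)) * Nat.centralBinom j * j.factorial := by rw [h2]
      _ = 2*(k-2*j) * (k.choose (2*j) * Nat.centralBinom j * j.factorial) := by ring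
  have h1 : (k+1).choose (2*(j+1)) = k.choose (2*j+1) + k.choose (2*(j+1)) := by
    rw [show 2*(j+1) = (2*j+1)+1 by ring, Nat.choose_succ_succ]
  unfold N
  rw [h1, Nat.add_mul, Nat.add_mul, key]
  ring

lemma cb_sq (j : ℕ) : Nat.centralBinom j ^ 2 * (j+1) ≤ 16 ^ j := by
  induction j with
  | zero => simp [Nat.centralBinom]
  | succ j ih =>
    have h3 : (j+1) * Nat.centralBinom (j+1) = 2*(2*j+1) * Nat.centralBinom j :=
      Nat.succ_mul_centralBinom_succ j
    have expand : Nat.centralBinom (j+1)^2 * (j+1+1) * (j+1)^2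
        = (2*(2*j+1))^2 * (j+2) * Nat.centralBinom j ^ 2 := by
      calc Nat.centralBinom (j+1)^2 * (j+1+1) * (j+1)^2
          = ((j+1) * Nat.centralBinom (j+1))^2 * (j+2) := by ring
        _ = (2*(2*j+1) * Nat.centralBinom j)^2 * (j+2) := by rw [h3]
        _ = (2*(2*j+1))^2 * (j+2) * Nat.centralBinom j ^ 2 := by ring
    have poly : (2*(2*j+1))^2 * (j+2) ≤ 16 * (j+1)^3 := by nlinarith
    have : Nat.centralBinom (j+1)^2 * (j+1+1) * (j+1)^2 ≤ 16^(j+1) * (j+1)^2 := by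
      rw [expand]
      calc (2*(2*j+1))^2 * (j+2) * Nat.centralBinom j ^ 2
          ≤ 16 * (j+1)^3 * Nat.centralBinom j ^ 2 :=
            Nat.mul_le_mul_right _ poly
        _ = 16 * (j+1)^2 * (Nat.centralBinom j ^2 * (j+1)) := by ring
        _ ≤ 16 * (j+1)^2 * 16^j := Nat.mul_le_mul_left _ ih
        _ = 16^(j+1) * (j+1)^2 := by ring
    exact Nat.le_of_mul_le_mul_right this (by positivity)

lemma choose_le_two_pow (n k : ℕ) : n.choose k ≤ 2 ^ n := by
  rcases le_or_gt k n with h | h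
  · calc n.choose k ≤ ∑ m ∈ range (n+1), n.choose m :=
        Finset.single_le_sum (f := fun m => n.choose m) (fun _ _ => Nat.zero_le _)
          (Finset.mem_range.2 (Nat.lt_succ_of_le h))
      _ = 2^n := Nat.sum_range_choose n
  · simp [Nat.choose_eq_zero_of_lt h]

lemma pow_le_exp_mul_factorial {c : ℝ} (hc : 0 ≤ c) (m : ℕ) :
    c ^ m ≤ Real.exp c * m.factorial := by
  have h1 : c ^ m / m.factorial ≤ Real.exp c := by
    calc c ^ m / m.factorial ≤ ∑ i ∈ range (m+1), c ^ i / i.factorial :=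
        Finset.single_le_sum (f := fun i => c^i / i.factorial)
          (fun i _ => by positivity) (Finset.mem_range.2 m.lt_succ_self)
      _ ≤ Real.exp c := Real.sum_le_exp_of_nonneg hc (m+1)
  have hf : (0:ℝ) < m.factorial := by positivity
  calc c ^ m = c ^ m / m.factorial * m.factorial := by field_simp
    _ ≤ Real.exp c * m.factorial := by
        apply mul_le_mul_of_nonneg_right h1 hf.le


noncomputable def T (a x : ℂ) (k j : ℕ) : ℂ :=
  (N k j : ℂ) * (2*a)^(k-2*j) * a^j * x^(k-2*j)

noncomputable def S (a x : ℂ) (k : ℕ) : ℂ := ∑ j ∈ range (k+1), T a x k j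

lemma sum_id (a x : ℂ) (k : ℕ) :
    (2*a*x) * S a x k
      + ∑ j ∈ range (k+1),
          (N k j : ℂ) * (2*a)^(k-2*j) * a^j * (((k-2*j : ℕ)) : ℂ) * x^(k-2*j-1)
    = S a x (k+1) := by
  -- RHS decomposition
  have hR : S a x (k+1)
      = (∑ j ∈ range (k+1), T a x (k+1) (j+1)) + T a x (k+1) 0 :=
    Finset.sum_range_succ' _ (k+1)
  have hsplit : ∀ j ∈ range (k+1), T a x (k+1) (j+1)
      = (N k (j+1) : ℂ) * (2*a)^(k-1-2*j) * a^(j+1) * x^(k-1-2*j)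
        + ((2*(k-2*j) : ℕ) : ℂ) * ((N k j : ℂ) * (2*a)^(k-1-2*j) * a^(j+1) * x^(k-1-2*j)) := by
    intro j _
    unfold T
    rw [show k+1-2*(j+1) = k-1-2*j by omega, N_rec]
    push_cast
    ring
  -- LHS first piece termwise
  have hU : ∀ j ∈ range (k+1), (2*a*x) * T a x k j
      = (N k j : ℂ) * (2*a)^(k+1-2*j) * a^j * x^(k+1-2*j) := by
    intro j _
    unfold T
    rcases le_or_gt (2*j) k with h | h
    · rw [show k+1-2*j = (k-2*j)+1 by omega, pow_succ, pow_succ]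
      ring
    · rw [N_eq_zero h]; simp
  -- LHS second piece termwise
  have hD : ∀ j ∈ range (k+1),
      (N k j : ℂ) * (2*a)^(k-2*j) * a^j * (((k-2*j : ℕ)) : ℂ) * x^(k-2*j-1)
      = ((2*(k-2*j) : ℕ) : ℂ) * ((N k j : ℂ) * (2*a)^(k-1-2*j) * a^(j+1) * x^(k-1-2*j)) := by
    intro j _
    rcases le_or_gt (k) (2*j) with h | h
    · rw [show k - 2*j = 0 by omega]; simp
    · rw [show k-2*j-1 = k-1-2*j by omega, show k-2*j = (k-1-2*j)+1 by omega]
      push_cast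
      ring
  rw [Finset.sum_congr rfl hD, hR, Finset.sum_congr rfl hsplit, Finset.sum_add_distrib]
  have hfirst : (2*a*x) * S a x k
      = (∑ j ∈ range (k+1), (N k j : ℂ) * (2*a)^(k+1-2*j) * a^j * x^(k+1-2*j)) := by
    rw [S, Finset.mul_sum]; exact Finset.sum_congr rfl hU
  rw [hfirst]
  -- peel j = 0 from the first sum
  rw [Finset.sum_range_succ' (fun j => (N k j : ℂ) * (2*a)^(k+1-2*j) * a^j * x^(k+1-2*j)) k]
  -- now match pieces
  have hA : ∀ j, (N k (j+1) : ℂ) * (2*a)^(k+1-2*(j+1)) * a^(j+1) * x^(k+1-2*(j+1))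
      = (N k (j+1) : ℂ) * (2*a)^(k-1-2*j) * a^(j+1) * x^(k-1-2*j) := by
    intro j; rw [show k+1-2*(j+1) = k-1-2*j by omega]
  have hlast : (∑ j ∈ range (k+1), (N k (j+1) : ℂ) * (2*a)^(k-1-2*j) * a^(j+1) * x^(k-1-2*j))
      = ∑ j ∈ range k, (N k (j+1) : ℂ) * (2*a)^(k-1-2*j) * a^(j+1) * x^(k-1-2*j) := by
    rw [Finset.sum_range_succ, N_eq_zero (by omega : k < 2*(k+1))]
    simp
  have h00 : T a x (k+1) 0 = (N k 0 : ℂ) * (2*a)^(k+1-2*0) * a^0 * x^(k+1-2*0) := by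
    unfold T; rw [N_zero, N_zero]
  rw [hlast, h00]
  simp only [hA]
  ring

lemma deriv_formula (a : ℂ) (k : ℕ) (x : ℝ) :
    iteratedDeriv k (fun y : ℝ => Complex.exp (a * (y:ℂ)^2)) x
      = Complex.exp (a * (x:ℂ)^2) * S a (x:ℂ) k := by
  induction k generalizing x with
  | zero => simp [S, T, N, Nat.centralBinom]
  | succ k ih =>
    rw [iteratedDeriv_succ]
    have hfun : iteratedDeriv k (fun y : ℝ => Complex.exp (a * (y:ℂ)^2))
        = fun y : ℝ => Complex.exp (a * (y:ℂ)^2) * S a (y:ℂ) k := funext ih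
    rw [hfun]
    have h1 : HasDerivAt (fun y : ℝ => Complex.exp (a * (y:ℂ)^2))
        (Complex.exp (a * (x:ℂ)^2) * (a * (2*(x:ℂ)))) x := by
      have hp : HasDerivAt (fun z : ℂ => a * z^2) (a * (2*(x:ℂ))) (x:ℂ) := by
        simpa using (hasDerivAt_pow 2 (x:ℂ)).const_mul a
      exact (hp.comp_ofReal).cexp
    have h2 : HasDerivAt (fun y : ℝ => S a (y:ℂ) k)
        (∑ j ∈ range (k+1),
          (N k j : ℂ) * (2*a)^(k-2*j) * a^j * (((k-2*j : ℕ)) : ℂ) * (x:ℂ)^(k-2*j-1)) x := by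
      apply HasDerivAt.fun_sum
      intro j _
      have hp := ((hasDerivAt_pow (k-2*j) (x:ℂ)).comp_ofReal).const_mul
        ((N k j : ℂ) * (2*a)^(k-2*j) * a^j)
      convert hp using 1
      · rfl
      · rfl
      ring
    have := (h1.fun_mul h2).deriv
    rw [this]
    rw [← sum_id a (x:ℂ) k]
    ring

lemma inner_bound {B : ℝ} (hB : 0 ≤ B) {k j m : ℕ} (hm : k = m + 2*j) :
    (k.choose (2*j) : ℝ)^2 * (Nat.centralBinom j : ℝ)^2 * (16*B^4)^m * (1/256)^j * k
      ≤ 16 * Real.exp (128*B^4) * ((m.factorial : ℝ))^2 := by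
  have h1 : (k.choose (2*j))^2 ≤ 4^k := by
    calc (k.choose (2*j))^2 ≤ (2^k)^2 := Nat.pow_le_pow_left (choose_le_two_pow k (2*j)) 2
      _ = 4^k := by rw [← pow_mul, show k*2 = 2*k by ring, pow_mul]; norm_num
  have h2 : (Nat.centralBinom j)^2 * k ≤ (m+2) * 16^j := by
    calc (Nat.centralBinom j)^2 * k ≤ (Nat.centralBinom j)^2 * ((j+1)*(m+2)) := by
          apply Nat.mul_le_mul_left; nlinarith [hm.ge]
      _ = (m+2) * ((Nat.centralBinom j)^2 * (j+1)) := by ring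
      _ ≤ (m+2) * 16^j := Nat.mul_le_mul_left _ (cb_sq j)
  have hnat : (k.choose (2*j))^2 * ((Nat.centralBinom j)^2 * k) ≤ 4^k * ((m+2) * 16^j) :=
    Nat.mul_le_mul h1 h2
  have hnatR : (k.choose (2*j) : ℝ)^2 * ((Nat.centralBinom j : ℝ)^2 * k)
      ≤ (4:ℝ)^k * (((m:ℝ)+2) * 16^j) := by exact_mod_cast hnat
  have h4 : (4:ℝ)^k = 4^m * 16^j := by
    rw [hm, pow_add, pow_mul]; norm_num
  have hm2 : ((m:ℝ)+2) ≤ 2*2^m := by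
    have h := Nat.lt_two_pow_self (n := m+1)
    have h' : (m+2 : ℕ) ≤ 2^(m+1) := h
    calc ((m:ℝ)+2) = ((m+2 : ℕ) : ℝ) := by push_cast; ring
      _ ≤ ((2^(m+1) : ℕ) : ℝ) := by exact_mod_cast h'
      _ = 2*2^m := by push_cast [pow_succ]; ring
  have A : (4:ℝ)^m * (16*B^4)^m = (64*B^4)^m := by
    rw [← mul_pow]; congr 1; ring
  have Bq : (16:ℝ)^j * ((16:ℝ)^j * (1/256)^j) = 1 := by
    rw [← mul_pow, ← mul_pow]; norm_num
  have A2 : (2:ℝ)^m * (64*B^4)^m = (128*B^4)^m := by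
    rw [← mul_pow]; congr 1; ring
  have hf : (1:ℝ) ≤ (m.factorial : ℝ) := by
    exact_mod_cast Nat.one_le_iff_ne_zero.2 m.factorial_ne_zero
  have hM2 : (m.factorial : ℝ) ≤ (m.factorial : ℝ)^2 := by nlinarith
  have hepos := (Real.exp_pos (128*B^4)).le
  calc (k.choose (2*j) : ℝ)^2 * (Nat.centralBinom j : ℝ)^2 * (16*B^4)^m * (1/256)^j * k
      = ((k.choose (2*j) : ℝ)^2 * ((Nat.centralBinom j : ℝ)^2 * k)) * ((16*B^4)^m * (1/256)^j) := by
        ring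
    _ ≤ ((4:ℝ)^k * (((m:ℝ)+2) * 16^j)) * ((16*B^4)^m * (1/256)^j) := by
        apply mul_le_mul_of_nonneg_right hnatR (by positivity)
    _ = ((m:ℝ)+2) * ((4:ℝ)^m * (16*B^4)^m) * ((16:ℝ)^j * ((16:ℝ)^j * (1/256)^j)) := by
        rw [h4]; ring
    _ = ((m:ℝ)+2) * (64*B^4)^m := by rw [A, Bq]; ring
    _ ≤ (2*2^m) * (64*B^4)^m := by
        apply mul_le_mul_of_nonneg_right hm2 (by positivity)
    _ = 2 * ((2:ℝ)^m * (64*B^4)^m) := by ring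
    _ = 2 * (128*B^4)^m := by rw [A2]
    _ ≤ 2 * (Real.exp (128*B^4) * m.factorial) := by
        apply mul_le_mul_of_nonneg_left (pow_le_exp_mul_factorial (by positivity) m) (by norm_num)
    _ ≤ 16 * Real.exp (128*B^4) * ((m.factorial : ℝ))^2 := by
        have := mul_le_mul_of_nonneg_left hM2 hepos
        nlinarith [this]

lemma term_bound {B : ℝ} (hB : 0 ≤ B) {k j : ℕ} (hk : 1 ≤ k) (hjk : 2*j ≤ k) :
    (N k j : ℝ) * B^(k-2*j) * (1/4:ℝ)^j
      ≤ 2*Real.exp (32*B^4) * (1/2:ℝ)^(k-2*j)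
        * ((k.factorial : ℝ)^((1:ℝ)/2) / (k:ℝ)^((1:ℝ)/4)) := by
  set m := k - 2*j with hmdef
  have hm : k = m + 2*j := by omega
  have hk0 : (0:ℝ) < k := by exact_mod_cast (by omega : 0 < k)
  apply le_of_pow_le_pow_left₀ (n := 4) (by norm_num) (by positivity)
  have e1 : (((k.factorial : ℝ))^((1:ℝ)/2))^4 = (k.factorial : ℝ)^2 := by
    rw [← Real.rpow_natCast ((k.factorial : ℝ)^((1:ℝ)/2)) 4, ← Real.rpow_mul (by positivity)]
    norm_num
  have e2 : (((k:ℝ))^((1:ℝ)/4))^4 = (k:ℝ) := by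
    rw [← Real.rpow_natCast ((k:ℝ)^((1:ℝ)/4)) 4, ← Real.rpow_mul (by positivity)]
    norm_num
  have hb1 : ((1/4:ℝ)^j)^4 = (1/256:ℝ)^j := by
    rw [← pow_mul, show j*4 = 4*j by ring, pow_mul]; norm_num
  have hb2 : ((B:ℝ)^m)^4 = (16*B^4)^m * (1/16:ℝ)^m := by
    rw [← mul_pow, ← pow_mul, show m*4 = 4*m by ring, pow_mul]; congr 1; ring
  have hb3 : ((1/2:ℝ)^m)^4 = (1/16:ℝ)^m := by
    rw [← pow_mul, show m*4 = 4*m by ring, pow_mul]; norm_num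
  have hexp : (Real.exp (32*B^4))^4 = Real.exp (128*B^4) := by
    rw [← Real.exp_nat_mul]; congr 1; push_cast; ring
  have hn1 : k.choose (2*j) * (2*j).factorial * (k - 2*j).factorial = k.factorial :=
    Nat.choose_mul_factorial_mul_factorial hjk
  have hn2 : (2*j).choose j * j.factorial * j.factorial = (2*j).factorial := by
    have := Nat.choose_mul_factorial_mul_factorial (show j ≤ 2*j by omega)
    rwa [show 2*j - j = j by omega] at this
  have hcb : Nat.centralBinom j = (2*j).choose j := rfl
  have hfact : (k.factorial : ℝ)
      = (k.choose (2*j) : ℝ) * ((Nat.centralBinom j : ℝ) * (j.factorial : ℝ) * (j.factorial : ℝ))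
        * ((m.factorial : ℝ)) := by
    rw [hcb]
    rw [← hmdef] at hn1
    push_cast [← hn1, ← hn2]
    ring
  have hNc : (N k j : ℝ)
      = (k.choose (2*j) : ℝ) * (Nat.centralBinom j : ℝ) * (j.factorial : ℝ) := by
    simp [N]
  have main : (N k j : ℝ)^4 * (16*B^4)^m * (1/256)^j * k
      ≤ 16 * Real.exp (128*B^4) * (k.factorial : ℝ)^2 := by
    calc (N k j : ℝ)^4 * (16*B^4)^m * (1/256)^j * k
        = ((k.choose (2*j) : ℝ)^2 * (Nat.centralBinom j : ℝ)^2 * (j.factorial:ℝ)^4)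
          * ((k.choose (2*j) : ℝ)^2 * (Nat.centralBinom j : ℝ)^2 * (16*B^4)^m * (1/256)^j * k) := by
          rw [hNc]; ring
      _ ≤ ((k.choose (2*j) : ℝ)^2 * (Nat.centralBinom j : ℝ)^2 * (j.factorial:ℝ)^4)
          * (16 * Real.exp (128*B^4) * ((m.factorial : ℝ))^2) := by
          apply mul_le_mul_of_nonneg_left (inner_bound hB hm) (by positivity)
      _ = 16 * Real.exp (128*B^4) * (k.factorial : ℝ)^2 := by
          rw [hfact]; ring
  have hRHS : (2*Real.exp (32*B^4) * (1/2:ℝ)^m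
        * ((k.factorial : ℝ)^((1:ℝ)/2) / (k:ℝ)^((1:ℝ)/4)))^4
      = 16 * Real.exp (128*B^4) * (1/16:ℝ)^m * ((k.factorial : ℝ)^2 / k) := by
    have expand : (2*Real.exp (32*B^4) * (1/2:ℝ)^m
        * ((k.factorial : ℝ)^((1:ℝ)/2) / (k:ℝ)^((1:ℝ)/4)))^4
      = 16 * (Real.exp (32*B^4))^4 * ((1/2:ℝ)^m)^4
        * ((((k.factorial : ℝ))^((1:ℝ)/2))^4 / (((k:ℝ))^((1:ℝ)/4))^4) := by
      ring
    rw [expand, e1, e2, hb3, hexp]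
  calc ((N k j : ℝ) * B^m * (1/4:ℝ)^j)^4
      = ((N k j : ℝ)^4 * (16*B^4)^m * (1/256)^j) * (1/16:ℝ)^m := by
        rw [show ((N k j : ℝ) * B^m * (1/4:ℝ)^j)^4
            = (N k j : ℝ)^4 * (B^m)^4 * ((1/4:ℝ)^j)^4 from by ring, hb1, hb2]
        ring
    _ ≤ (16 * Real.exp (128*B^4) * ((k.factorial : ℝ)^2 / k)) * (1/16:ℝ)^m := by
        apply mul_le_mul_of_nonneg_right _ (by positivity)
        rw [← mul_div_assoc, le_div_iff₀ hk0]
        exact main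
    _ = (2*Real.exp (32*B^4) * (1/2:ℝ)^m
        * ((k.factorial : ℝ)^((1:ℝ)/2) / (k:ℝ)^((1:ℝ)/4)))^4 := by
        rw [hRHS]; ring

lemma geom_bound (k : ℕ) :
    ∑ j ∈ range (k+1), (if 2*j ≤ k then ((1/2:ℝ))^(k-2*j) else 0) ≤ 2 := by
  have step : ∀ j ∈ range (k+1),
      (if 2*j ≤ k then ((1/2:ℝ))^(k-2*j) else 0)
        ≤ (if j ∈ range (k/2+1) then ((1/2:ℝ))^(k/2-j) else 0) := by
    intro j _
    by_cases h : 2*j ≤ k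
    · rw [if_pos h, if_pos (by simp only [Finset.mem_range]; omega)]
      exact pow_le_pow_of_le_one (by norm_num) (by norm_num) (by omega)
    · rw [if_neg h, if_neg (by simp only [Finset.mem_range]; omega)]
  calc ∑ j ∈ range (k+1), (if 2*j ≤ k then ((1/2:ℝ))^(k-2*j) else 0)
      ≤ ∑ j ∈ range (k+1), (if j ∈ range (k/2+1) then ((1/2:ℝ))^(k/2-j) else 0) :=
        Finset.sum_le_sum step
    _ = ∑ j ∈ range (k+1) ∩ range (k/2+1), ((1/2:ℝ))^(k/2-j) := Finset.sum_ite_mem _ _ _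
    _ = ∑ j ∈ range (k/2+1), ((1/2:ℝ))^(k/2-j) := by
        rw [Finset.inter_eq_right.2 (Finset.range_subset_range.2 (by omega))]
    _ = ∑ j ∈ range (k/2+1), ((1/2:ℝ))^j := by
        rw [← Finset.sum_range_reflect (fun j => ((1/2:ℝ))^j) (k/2+1)]
        exact Finset.sum_congr rfl (fun j hj => by norm_num)
    _ ≤ 2 := sum_geometric_two_le _

end GKG

open GKG

theorem gaussian_kernel_gevrey (t : ℝ) (ht : t ≠ 0) (L : ℝ) (hL : 0 < L) :
    ∃ C : ℝ, 0 < C ∧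
      ∀ (k : ℕ), 1 ≤ k → ∀ x ∈ Icc (-L) L,
        ‖iteratedDeriv k
            (fun x : ℝ => Complex.exp (Complex.I * (x : ℂ) ^ 2 / (4 * (t : ℂ)))) x‖
          ≤ C * (Nat.factorial k : ℝ) ^ ((1 : ℝ) / 2) /
              ((k : ℝ) ^ ((1 : ℝ) / 4) * (Real.sqrt |t|) ^ k) := by
  have htpos : 0 < |t| := abs_pos.2 ht
  set R : ℝ := Real.sqrt |t| with hRdef
  have hR0 : 0 < R := Real.sqrt_pos.2 htpos
  have hR2 : R^2 = |t| := Real.sq_sqrt htpos.le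
  set B : ℝ := L/(2*R) with hBdef
  have hB : 0 ≤ B := by positivity
  refine ⟨4*Real.exp (32*B^4), by positivity, ?_⟩
  intro k hk x hx
  have hk0 : (0:ℝ) < k := by exact_mod_cast (by omega : 0 < k)
  set a : ℂ := Complex.I / (4*(t:ℂ)) with ha
  have hfun : (fun x : ℝ => Complex.exp (Complex.I * (x:ℂ)^2 / (4*(t:ℂ))))
      = (fun y : ℝ => Complex.exp (a * (y:ℂ)^2)) := by
    funext y; congr 1; rw [ha]; ring
  rw [hfun, deriv_formula]
  have hnorm1 : ‖Complex.exp (a*(x:ℂ)^2)‖ = 1 := by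
    have hz : a*(x:ℂ)^2 = Complex.I * ((x^2/(4*t) : ℝ) : ℂ) := by
      rw [ha]; push_cast; ring
    have hre : (a*(x:ℂ)^2).re = 0 := by rw [hz]; simp [-Complex.ofReal_div]
    rw [Complex.norm_exp, hre, Real.exp_zero]
  rw [norm_mul, hnorm1, one_mul]
  -- norm of a
  have hna : ‖a‖ = 1/(4*|t|) := by
    rw [ha, norm_div, Complex.norm_I, norm_mul]
    simp [Complex.norm_real]
  have hxL : |x| ≤ L := abs_le.2 ⟨hx.1, hx.2⟩
  have hterm : ∀ j ∈ range (k+1), ‖T a (x:ℂ) k j‖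
      ≤ (if 2*j ≤ k then ((1/2:ℝ))^(k-2*j) else 0)
          * (2*Real.exp (32*B^4) * ((k.factorial : ℝ)^((1:ℝ)/2) / (k:ℝ)^((1:ℝ)/4)) * (1/R)^k) := by
    intro j _
    by_cases hc : 2*j ≤ k
    · set e := k - 2*j with hedef
      have hTn : ‖T a (x:ℂ) k j‖ = (N k j : ℝ) * (2*‖a‖)^e * ‖a‖^j * |x|^e := by
        simp [T, norm_mul, norm_pow, Complex.norm_natCast, Complex.norm_real, ← hedef]
      have step1 : ‖T a (x:ℂ) k j‖ ≤ (N k j : ℝ) * (2*‖a‖)^e * ‖a‖^j * L^e := by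
        rw [hTn]
        apply mul_le_mul_of_nonneg_left (pow_le_pow_left₀ (abs_nonneg x) hxL e) (by positivity)
      have hcomb : (2*(1/(4*|t|)):ℝ)^e * (1/(4*|t|):ℝ)^j * L^e
          = B^e * (1/4:ℝ)^j * (1/R)^k := by
        rw [← hR2, show k = e + 2*j by omega]
        have q1 : (2*(1/(4*R^2)):ℝ)^e * L^e = ((L/(2*R)) * (1/R))^e := by
          rw [← mul_pow]; congr 1; field_simp; ring
        have q2 : ((1:ℝ)/(4*R^2))^j = ((1/4) * (1/R)^2)^j := by
          congr 1; field_simp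
        calc (2*(1/(4*R^2)):ℝ)^e * (1/(4*R^2):ℝ)^j * L^e
            = ((2*(1/(4*R^2)):ℝ)^e * L^e) * ((1:ℝ)/(4*R^2))^j := by ring
          _ = ((L/(2*R)) * (1/R))^e * ((1/4) * (1/R)^2)^j := by rw [q1, q2]
          _ = (L/(2*R))^e * (1/4:ℝ)^j * (1/R)^(e+2*j) := by
              rw [mul_pow, mul_pow]; ring
      have step2 : (N k j : ℝ) * (2*‖a‖)^e * ‖a‖^j * L^e
          = ((N k j : ℝ) * B^e * (1/4:ℝ)^j) * (1/R)^k := by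
        rw [hna]
        calc (N k j : ℝ) * (2*(1/(4*|t|)))^e * (1/(4*|t|))^j * L^e
            = (N k j : ℝ) * ((2*(1/(4*|t|)):ℝ)^e * (1/(4*|t|):ℝ)^j * L^e) := by ring
          _ = (N k j : ℝ) * (B^e * (1/4:ℝ)^j * (1/R)^k) := by rw [hcomb]
          _ = ((N k j : ℝ) * B^e * (1/4:ℝ)^j) * (1/R)^k := by ring
      rw [if_pos hc]
      calc ‖T a (x:ℂ) k j‖ ≤ ((N k j : ℝ) * B^e * (1/4:ℝ)^j) * (1/R)^k := by
            rw [← step2]; exact step1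
        _ ≤ (2*Real.exp (32*B^4) * (1/2:ℝ)^e
              * ((k.factorial : ℝ)^((1:ℝ)/2) / (k:ℝ)^((1:ℝ)/4))) * (1/R)^k := by
            apply mul_le_mul_of_nonneg_right (term_bound hB hk hc) (by positivity)
        _ = ((1/2:ℝ))^e * (2*Real.exp (32*B^4)
              * ((k.factorial : ℝ)^((1:ℝ)/2) / (k:ℝ)^((1:ℝ)/4)) * (1/R)^k) := by ring
    · rw [if_neg hc, zero_mul]
      have : N k j = 0 := N_eq_zero (by omega)
      simp [T, this]
  calc ‖S a (x:ℂ) k‖ ≤ ∑ j ∈ range (k+1), ‖T a (x:ℂ) k j‖ := norm_sum_le _ _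
    _ ≤ ∑ j ∈ range (k+1), (if 2*j ≤ k then ((1/2:ℝ))^(k-2*j) else 0)
          * (2*Real.exp (32*B^4) * ((k.factorial : ℝ)^((1:ℝ)/2) / (k:ℝ)^((1:ℝ)/4)) * (1/R)^k) :=
        Finset.sum_le_sum hterm
    _ = (∑ j ∈ range (k+1), (if 2*j ≤ k then ((1/2:ℝ))^(k-2*j) else 0))
          * (2*Real.exp (32*B^4) * ((k.factorial : ℝ)^((1:ℝ)/2) / (k:ℝ)^((1:ℝ)/4)) * (1/R)^k) := by
        rw [← Finset.sum_mul]
    _ ≤ 2 * (2*Real.exp (32*B^4) * ((k.factorial : ℝ)^((1:ℝ)/2) / (k:ℝ)^((1:ℝ)/4)) * (1/R)^k) := by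
        apply mul_le_mul_of_nonneg_right (geom_bound k) (by positivity)
    _ = 4*Real.exp (32*B^4) * (Nat.factorial k : ℝ) ^ ((1 : ℝ) / 2) /
          ((k : ℝ) ^ ((1 : ℝ) / 4) * R ^ k) := by
        have h1 : ((1:ℝ)/R)^k = 1/R^k := by rw [div_pow]; norm_num
        have hk4 : (0:ℝ) < (k:ℝ) ^ ((1:ℝ)/4) := Real.rpow_pos_of_pos hk0 _
        rw [h1]
        field_simp
        ring
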